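/- arXiv:1008.1346 — 2 statements merged into one kernel-verified Lean document; each statement's English description precedes it below -/
import Mathlib

section
/- The index is locally constant on the set of Fredholm operators: if T₀ and T₁ are Fredholm operators on H joined by a norm-continuous path T_t, t ∈ [0,1], of Fredholm operators, then Ind(T₀) = Ind(T₁). -/
/-- A bounded operator on a Hilbert space is *Fredholm* if its kernel is finite dimensional,
its range is closed, and its cokernel is finite dimensional. -/
def IsFredholm {H : Type} [NormedAddCommGroup H] [InnerProductSpace ℂ H] [CompleteSpace H]
    (T : H →L[ℂ] H) : Prop :=
  FiniteDimensional ℂ (LinearMap.ker (T : H →ₗ[ℂ] H)) ∧ IsClosed (LinearMap.range (T : H →ₗ[ℂ] H) : Set H) ∧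
    FiniteDimensional ℂ (H ⧸ LinearMap.range (T : H →ₗ[ℂ] H))

/-- The *index* of an operator: `dim ker T − dim coker T` (as an integer). -/
noncomputable def fredholmIndex {H : Type} [NormedAddCommGroup H] [InnerProductSpace ℂ H]
    [CompleteSpace H] (T : H →L[ℂ] H) : ℤ :=
  (Module.finrank ℂ (LinearMap.ker (T : H →ₗ[ℂ] H)) : ℤ) - Module.finrank ℂ (H ⧸ LinearMap.range (T : H →ₗ[ℂ] H))

section Aux

open Module ContinuousLinearMap

variable {H : Type} [NormedAddCommGroup H] [InnerProductSpace ℂ H] [CompleteSpace H]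

/-- Core computation: if `K ⊕ M = H` with `M` closed, `K, W` finite-dimensional, and
`(m, w) ↦ S m + w : M × W → H` is bijective, then `ind S = dim K - dim W`. -/
lemma core_index (S : H →L[ℂ] H) (K M W : Submodule ℂ H) (hKM : IsCompl K M)
    (hMc : IsClosed (M : Set H)) [FiniteDimensional ℂ K] [FiniteDimensional ℂ W]
    (hbij : Function.Bijective ((S.comp M.subtypeL).coprod W.subtypeL)) :
    fredholmIndex S = (finrank ℂ K : ℤ) - finrank ℂ W := by
  haveI : CompleteSpace M := hMc.completeSpace_coe
  set Φ : (M × W) →L[ℂ] H := (S.comp M.subtypeL).coprod W.subtypeL with hΦ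
  have hΦ_apply : ∀ (m : M) (w : W), Φ (m, w) = S m + w := fun m w => rfl
  -- the image `N = S(M)`
  set N : Submodule ℂ H := LinearMap.range ((S.comp M.subtypeL : M →L[ℂ] H) : M →ₗ[ℂ] H) with hN
  have hNmem : ∀ x : H, x ∈ N ↔ ∃ m : M, S m = x := by
    intro x
    constructor
    · rintro ⟨m, rfl⟩; exact ⟨m, rfl⟩
    · rintro ⟨m, rfl⟩; exact ⟨m, rfl⟩
  have hN_le : N ≤ LinearMap.range (S : H →ₗ[ℂ] H) := by
    rintro x ⟨m, rfl⟩; exact ⟨m, rfl⟩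
  -- `N` and `W` are complementary
  have hNW : IsCompl N W := by
    constructor
    · rw [disjoint_iff]
      ext x
      simp only [Submodule.mem_inf, Submodule.mem_bot]
      constructor
      · rintro ⟨hxN, hxW⟩
        obtain ⟨m, hm⟩ := (hNmem x).1 hxN
        have h0 : Φ (m, -⟨x, hxW⟩) = 0 := by
          simp [hΦ_apply, hm]
        have := hbij.1 (a₁ := (m, -⟨x, hxW⟩)) (a₂ := 0) (by simpa using h0)
        have : (-⟨x, hxW⟩ : W) = 0 := congrArg Prod.snd this
        simpa [neg_eq_zero, Subtype.ext_iff] using this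
      · rintro rfl; exact ⟨N.zero_mem, W.zero_mem⟩
    · rw [codisjoint_iff, eq_top_iff]
      intro x _
      obtain ⟨⟨m, w⟩, hx⟩ := hbij.2 x
      exact Submodule.mem_sup.2 ⟨S m, ⟨m, rfl⟩, w, w.2, hx⟩
  -- `H ⧸ N` is finite-dimensional, of the same rank as `W`
  have eQW : (H ⧸ N) ≃ₗ[ℂ] W := Submodule.quotientEquivOfIsCompl N W hNW
  haveI : FiniteDimensional ℂ (H ⧸ N) := eQW.symm.finiteDimensional
  have hrankQW : finrank ℂ (H ⧸ N) = finrank ℂ W := eQW.finrank_eq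
  -- the finite-dimensional "symbol" map
  set f : K →ₗ[ℂ] H ⧸ N := N.mkQ.comp ((S : H →ₗ[ℂ] H).comp K.subtype) with hf
  have hf_apply : ∀ k : K, f k = N.mkQ (S k) := fun k => rfl
  -- injectivity of S on M
  have hSMinj : ∀ m : M, S m = 0 → m = 0 := by
    intro m hm
    have h0 : Φ (m, 0) = 0 := by simp [hΦ_apply, hm]
    have := hbij.1 (a₁ := (m, 0)) (a₂ := 0) (by simpa using h0)
    exact congrArg Prod.fst this
  -- the projection onto K along M
  set P : H →ₗ[ℂ] K := K.projectionOnto M hKM with hP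
  -- Claim A: `ker S ≃ ker f` (via P)
  set g : (LinearMap.ker (S : H →ₗ[ℂ] H)) →ₗ[ℂ] K := P.comp (LinearMap.ker (S : H →ₗ[ℂ] H)).subtype with hg
  have hg_inj : Function.Injective g := by
    intro x y hxy
    have hd : ((x : H) - y) ∈ M := by
      rw [← Submodule.projectionOnto_apply_eq_zero_iff (q := M) hKM]
      simp only [hg, LinearMap.comp_apply, Submodule.subtype_apply, hP] at hxy ⊢
      rw [map_sub, hxy, sub_self]
    have hSd : S (⟨(x : H) - y, hd⟩ : M) = 0 := by
      have hx0 : S (x : H) = 0 := x.2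
      have hy0 : S (y : H) = 0 := y.2
      simp [map_sub, hx0, hy0]
    have := hSMinj _ hSd
    have : ((x : H) - y) = 0 := congrArg Subtype.val this
    exact Subtype.ext (sub_eq_zero.1 this)
  have hg_range : LinearMap.range g = LinearMap.ker f := by
    ext k
    simp only [LinearMap.mem_range, LinearMap.mem_ker]
    constructor
    · rintro ⟨x, rfl⟩
      have hx0 : S (x : H) = 0 := x.2
      have hd : ((x : H) - (g x : H)) ∈ M := by
        rw [← Submodule.projectionOnto_apply_eq_zero_iff (q := M) hKM]
        have hgx : K.projectionOnto M hKM (x : H) = g x := rfl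
        rw [map_sub, Submodule.projectionOnto_apply_left hKM (g x), hgx, sub_self]
      have hSg : S ((g x : K) : H) ∈ N := by
        rw [hNmem]
        refine ⟨-⟨(x : H) - (g x : H), hd⟩, ?_⟩
        simp [map_neg, map_sub, hx0]
      rw [hf_apply, Submodule.mkQ_apply, Submodule.Quotient.mk_eq_zero N]
      exact hSg
    · intro hk
      rw [hf_apply] at hk
      have hSk : S (k : H) ∈ N := by
        rw [Submodule.mkQ_apply, Submodule.Quotient.mk_eq_zero N] at hk; exact hk
      obtain ⟨m, hm⟩ := (hNmem _).1 hSk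
      have hker : ((k : H) - m) ∈ LinearMap.ker (S : H →ₗ[ℂ] H) := by
        simp only [LinearMap.mem_ker, map_sub, ContinuousLinearMap.coe_coe, hm, sub_self]
      refine ⟨⟨(k : H) - m, hker⟩, ?_⟩
      ext
      simp only [hg, LinearMap.comp_apply, Submodule.subtype_apply, hP, map_sub]
      rw [Submodule.projectionOnto_apply_left hKM k,
        Submodule.projectionOnto_apply_right hKM m, sub_zero]
  have hA : finrank ℂ (LinearMap.ker (S : H →ₗ[ℂ] H)) = finrank ℂ (LinearMap.ker f) := by
    rw [← LinearMap.finrank_range_of_inj hg_inj, hg_range]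
  -- Claim B: `H ⧸ range S ≃ (H ⧸ N) ⧸ range f`
  have hmap : (LinearMap.range (S : H →ₗ[ℂ] H)).map N.mkQ = LinearMap.range f := by
    ext y
    simp only [Submodule.mem_map, LinearMap.mem_range]
    constructor
    · rintro ⟨-, ⟨x, rfl⟩, rfl⟩
      refine ⟨P x, ?_⟩
      rw [hf_apply]
      have hd : (x - ((P x : K) : H)) ∈ M := by
        rw [← Submodule.projectionOnto_apply_eq_zero_iff (q := M) hKM]
        simp only [hP, map_sub, Submodule.projectionOnto_apply_left, sub_self]
      have : S x - S ((P x : K) : H) ∈ N := (hNmem _).2 ⟨⟨_, hd⟩, by simp [map_sub]⟩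
      have := (Submodule.Quotient.eq N).2 this
      exact this.symm
    · rintro ⟨k, rfl⟩
      exact ⟨S (k : H), ⟨(k : H), rfl⟩, rfl⟩
  have eB : ((H ⧸ N) ⧸ (LinearMap.range (S : H →ₗ[ℂ] H)).map N.mkQ) ≃ₗ[ℂ] (H ⧸ LinearMap.range (S : H →ₗ[ℂ] H)) :=
    Submodule.quotientQuotientEquivQuotient N (LinearMap.range (S : H →ₗ[ℂ] H)) hN_le
  have hB : finrank ℂ (H ⧸ LinearMap.range (S : H →ₗ[ℂ] H))
      = finrank ℂ ((H ⧸ N) ⧸ LinearMap.range f) := by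
    rw [← hmap]; exact (eB.finrank_eq).symm
  -- rank-nullity arithmetic
  have e1 : finrank ℂ (LinearMap.range f) + finrank ℂ (LinearMap.ker f) = finrank ℂ K :=
    LinearMap.finrank_range_add_finrank_ker f
  have e2 : finrank ℂ ((H ⧸ N) ⧸ LinearMap.range f) + finrank ℂ (LinearMap.range f)
      = finrank ℂ (H ⧸ N) :=
    Submodule.finrank_quotient_add_finrank (LinearMap.range f)
  rw [fredholmIndex, hA, hB]
  rw [hrankQW] at e2
  omega

/-- Local constancy of the index at a Fredholm operator. -/
lemma eventually_fredholmIndex_eq (T : H →L[ℂ] H) (hT : _root_.IsFredholm T) :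
    ∀ᶠ S in nhds T, fredholmIndex S = fredholmIndex T := by
  obtain ⟨h1, h2, h3⟩ := hT
  set K := LinearMap.ker (T : H →ₗ[ℂ] H) with hK
  set R := LinearMap.range (T : H →ₗ[ℂ] H) with hR
  haveI : FiniteDimensional ℂ K := h1
  haveI : CompleteSpace K := (ContinuousLinearMap.isClosed_ker T).completeSpace_coe
  haveI : CompleteSpace R := h2.completeSpace_coe
  set M := Kᗮ with hM
  set W := Rᗮ with hW
  haveI : CompleteSpace M := K.isClosed_orthogonal.completeSpace_coe
  haveI : CompleteSpace W := R.isClosed_orthogonal.completeSpace_coe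
  have hKM : IsCompl K M := K.isCompl_orthogonal
  have hRW : IsCompl R W := R.isCompl_orthogonal
  haveI : FiniteDimensional ℂ (H ⧸ R) := h3
  haveI : FiniteDimensional ℂ W :=
    (Submodule.quotientEquivOfIsCompl R W hRW).finiteDimensional
  -- `Φ T` is bijective
  set ΦT : (M × W) →L[ℂ] H := (T.comp M.subtypeL).coprod W.subtypeL with hΦT
  have hΦT_apply : ∀ p : M × W, ΦT p = T (p.1 : H) + (p.2 : H) := fun p => rfl
  have hbijT : Function.Bijective ΦT := by
    constructor
    · have hker : ∀ p : M × W, ΦT p = 0 → p = 0 := by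
        rintro ⟨m, w⟩ hp
        rw [hΦT_apply] at hp
        have hTm : T (m : H) = -(w : H) := eq_neg_of_add_eq_zero_left hp
        have hTm0 : T (m : H) = 0 := by
          refine Submodule.disjoint_def.1 hRW.disjoint _ ⟨_, rfl⟩ ?_
          rw [hTm]; exact W.neg_mem w.2
        have hw0 : (w : H) = 0 := by
          have := hTm0.symm.trans hTm
          simpa [neg_eq_zero] using this.symm
        have hm0 : (m : H) = 0 :=
          Submodule.disjoint_def.1 hKM.disjoint _ hTm0 m.2
        ext
        · exact hm0
        · exact hw0
      intro p q hpq
      have : ΦT (p - q) = 0 := by rw [map_sub, hpq, sub_self]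
      have := hker _ this
      exact sub_eq_zero.1 this
    · intro x
      obtain ⟨r, w, hr, hw, hrw⟩ := Submodule.codisjoint_iff_exists_add_eq.mp hRW.codisjoint x
      obtain ⟨y, hy⟩ := hr
      obtain ⟨k, m, hk, hm, hkm⟩ := Submodule.codisjoint_iff_exists_add_eq.mp hKM.codisjoint y
      refine ⟨(⟨m, hm⟩, ⟨w, hw⟩), ?_⟩
      rw [hΦT_apply]
      have : T m = r := by
        rw [← hy, ← hkm, map_add]
        have : (T : H →ₗ[ℂ] H) k = 0 := hk
        rw [this, zero_add]; rfl
      rw [this, hrw]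
  -- package `Φ T` as a continuous linear equivalence
  set e : (M × W) ≃L[ℂ] H := ContinuousLinearEquiv.ofBijective ΦT
    (LinearMap.ker_eq_bot.2 hbijT.1) (LinearMap.range_eq_top.2 hbijT.2) with he
  have he_coe : ∀ p, e p = ΦT p := fun p => rfl
  set C : ℝ := ‖(e.symm : H →L[ℂ] (M × W))‖ with hC
  have hC0 : 0 ≤ C := by rw [hC]; exact norm_nonneg ((e.symm : H →L[ℂ] (M × W)))
  refine Metric.eventually_nhds_iff.2 ⟨(C + 1)⁻¹, by positivity, ?_⟩
  intro S hS
  rw [dist_eq_norm] at hS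
  set ΦS : (M × W) →L[ℂ] H := (S.comp M.subtypeL).coprod W.subtypeL with hΦS
  have hΦS_apply : ∀ p : M × W, ΦS p = S (p.1 : H) + (p.2 : H) := fun p => rfl
  have hdiff : ‖ΦT - ΦS‖ ≤ ‖T - S‖ := by
    refine ContinuousLinearMap.opNorm_le_bound _ (norm_nonneg _) fun p => ?_
    have h1 : (ΦT - ΦS) p = (T - S) (p.1 : H) := by
      simp only [ContinuousLinearMap.sub_apply, hΦT_apply, hΦS_apply]
      abel
    rw [h1]
    calc ‖(T - S) (p.1 : H)‖ ≤ ‖T - S‖ * ‖(p.1 : H)‖ :=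
          ContinuousLinearMap.le_opNorm _ _
      _ ≤ ‖T - S‖ * ‖p‖ := by
          gcongr
          exact norm_fst_le p
  set u : (M × W) →L[ℂ] (M × W) := (e.symm : H →L[ℂ] (M × W)).comp ΦS with hu
  have hΦSu : ⇑ΦS = ⇑e ∘ ⇑u := by
    funext x
    simp only [Function.comp_apply, hu, ContinuousLinearMap.comp_apply,
      ContinuousLinearEquiv.coe_coe, e.apply_symm_apply]
  have hone : (1 : (M × W) →L[ℂ] (M × W)) - u
      = (e.symm : H →L[ℂ] (M × W)).comp (ΦT - ΦS) := by
    refine ContinuousLinearMap.ext fun x => ?_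
    simp only [ContinuousLinearMap.sub_apply, ContinuousLinearMap.one_apply, hu,
      ContinuousLinearMap.comp_apply, ContinuousLinearEquiv.coe_coe, map_sub]
    congr 1
    rw [← he_coe x, e.symm_apply_apply]
  have hnorm : ‖(1 : (M × W) →L[ℂ] (M × W)) - u‖ < 1 := by
    have hcomp : ‖(1 : (M × W) →L[ℂ] (M × W)) - u‖ ≤ C * ‖ΦT - ΦS‖ := by
      rw [hone]; exact ContinuousLinearMap.opNorm_comp_le _ _
    have hTS : ‖T - S‖ < (C + 1)⁻¹ := by rwa [norm_sub_rev]
    have h2 : C * ‖T - S‖ ≤ C * (C + 1)⁻¹ :=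
      mul_le_mul_of_nonneg_left hTS.le hC0
    have h3 : C * (C + 1)⁻¹ < 1 := by
      rw [← div_eq_mul_inv]
      exact (div_lt_one (by positivity)).2 (by linarith)
    have h4 : C * ‖ΦT - ΦS‖ ≤ C * ‖T - S‖ := mul_le_mul_of_nonneg_left hdiff hC0
    linarith
  set v : ((M × W) →L[ℂ] (M × W))ˣ := Units.oneSub ((1 : (M × W) →L[ℂ] (M × W)) - u) hnorm with hv
  have hvval : (v : (M × W) →L[ℂ] (M × W)) = u := by
    rw [hv, Units.val_oneSub, sub_sub_cancel]
  have hbiju : Function.Bijective u := by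
    rw [← hvval]
    refine Function.bijective_iff_has_inverse.2 ⟨⇑(↑v⁻¹ : (M × W) →L[ℂ] (M × W)), ?_, ?_⟩
    · intro x
      have h : (↑v⁻¹ * ↑v : (M × W) →L[ℂ] (M × W)) x = x := by rw [v.inv_mul]; rfl
      rw [ContinuousLinearMap.mul_apply] at h
      exact h
    · intro x
      have h : (↑v * ↑v⁻¹ : (M × W) →L[ℂ] (M × W)) x = x := by rw [v.mul_inv]; rfl
      rw [ContinuousLinearMap.mul_apply] at h
      exact h
  have hbijS : Function.Bijective ΦS := by
    rw [hΦSu]; exact e.bijective.comp hbiju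
  have hT' := core_index T K M W hKM K.isClosed_orthogonal hbijT
  have hS' := core_index S K M W hKM K.isClosed_orthogonal hbijS
  rw [hS', hT']

end Aux

/-- The index is constant along norm-continuous paths of Fredholm operators: if `T t`,
`t ∈ [0,1]`, is a continuous path of Fredholm operators, then `Ind (T 0) = Ind (T 1)`. -/
theorem fredholmIndex_eq_of_path
    {H : Type} [NormedAddCommGroup H] [InnerProductSpace ℂ H] [CompleteSpace H]
    (T : ℝ → (H →L[ℂ] H)) (hcont : ContinuousOn T (Set.Icc 0 1))
    (hFred : ∀ t ∈ Set.Icc (0 : ℝ) 1, IsFredholm (T t)) :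
    fredholmIndex (T 0) = fredholmIndex (T 1) := by
  have h0 : (0 : ℝ) ∈ Set.Icc (0 : ℝ) 1 := ⟨le_refl 0, zero_le_one⟩
  have h1 : (1 : ℝ) ∈ Set.Icc (0 : ℝ) 1 := ⟨zero_le_one, le_refl 1⟩
  haveI : PreconnectedSpace (Set.Icc (0 : ℝ) 1) :=
    Subtype.preconnectedSpace isPreconnected_Icc
  have hf : IsLocallyConstant (fun t : Set.Icc (0 : ℝ) 1 => fredholmIndex (T t)) := by
    rw [IsLocallyConstant.iff_eventually_eq]
    intro x
    have hkey := eventually_fredholmIndex_eq (T x) (hFred x x.2)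
    have hcx : ContinuousAt (fun y : Set.Icc (0 : ℝ) 1 => T y) x :=
      (hcont.restrict).continuousAt
    exact hcx.eventually hkey
  exact hf.apply_eq_of_preconnectedSpace ⟨0, h0⟩ ⟨1, h1⟩
end

section
/- For a continuous function f on the circle, the commutator [P, M_f] = P M_f − M_f P of the Hardy projection P with the multiplication operator M_f is a compact operator on L²(S¹). -/
open MeasureTheory AddCircle

instance : Fact ((0 : ℝ) < 2 * Real.pi) := ⟨by positivity⟩

/-- The space `L²(S¹)` of square-integrable functions on the circle (of length `2π`),
with respect to its normalized Haar measure. -/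
noncomputable abbrev L2Circle : Type :=
  Lp ℂ 2 (@haarAddCircle (2 * Real.pi) _)

/-- The Hardy space `H²(S¹) ⊆ L²(S¹)`: the closed span of the Fourier monomials `zⁿ`, `n ≥ 0`. -/
noncomputable def hardySpace : Submodule ℂ L2Circle :=
  (Submodule.span ℂ (Set.range fun n : ℕ => (fourierLp 2 (n : ℤ) : L2Circle))).topologicalClosure

instance : CompleteSpace hardySpace :=
  (Submodule.isClosed_topologicalClosure _).completeSpace_coe

/-- The Hardy projection `P : L²(S¹) → L²(S¹)`, i.e. the orthogonal projection onto the Hardy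
space. -/
noncomputable def hardyProjection : L2Circle →L[ℂ] L2Circle :=
  hardySpace.subtypeL ∘L Submodule.orthogonalProjectionOnto hardySpace

namespace HardyAux

noncomputable abbrev μc : Measure (AddCircle (2 * Real.pi)) := haarAddCircle

lemma memG (g : C(AddCircle (2 * Real.pi), ℂ)) : MemLp (⇑g) ⊤ μc :=
  memLp_top_of_bound g.continuous.aestronglyMeasurable ‖g‖
    (Filter.Eventually.of_forall fun x => g.norm_coe_le_norm x)

/-- Pointwise multiplication by `g` as a map on `L²`. -/
noncomputable def mulFun (g : C(AddCircle (2 * Real.pi), ℂ)) (h : L2Circle) : L2Circle :=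
  ((Lp.memLp h).smul (r := 2) (memG g)).toLp (⇑g • ⇑h)

lemma mulFun_coe (g : C(AddCircle (2 * Real.pi), ℂ)) (h : L2Circle) :
    (mulFun g h : AddCircle (2 * Real.pi) → ℂ) =ᵐ[μc] fun x => g x * h x :=
  (MemLp.coeFn_toLp _).trans (Filter.Eventually.of_forall fun _ => rfl)

noncomputable def mulBil :
    C(AddCircle (2 * Real.pi), ℂ) →ₗ[ℂ] L2Circle →ₗ[ℂ] L2Circle :=
  LinearMap.mk₂ ℂ mulFun
    (fun g g' h => by
      apply Lp.ext
      filter_upwards [mulFun_coe (g + g') h, mulFun_coe g h, mulFun_coe g' h,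
        Lp.coeFn_add (mulFun g h) (mulFun g' h)] with x h1 h2 h3 h4
      rw [h1, h4, Pi.add_apply, h2, h3, ContinuousMap.add_apply, add_mul])
    (fun c g h => by
      apply Lp.ext
      filter_upwards [mulFun_coe (c • g) h, mulFun_coe g h,
        Lp.coeFn_smul c (mulFun g h)] with x h1 h2 h3
      rw [h1, h3, Pi.smul_apply, h2, ContinuousMap.smul_apply, smul_eq_mul, smul_eq_mul,
        mul_assoc])
    (fun g h h' => by
      apply Lp.ext
      filter_upwards [mulFun_coe g (h + h'), mulFun_coe g h, mulFun_coe g h',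
        Lp.coeFn_add (mulFun g h) (mulFun g h'), Lp.coeFn_add h h'] with x h1 h2 h3 h4 h5
      rw [h1, h4, Pi.add_apply, h2, h3, h5, Pi.add_apply, mul_add])
    (fun c g h => by
      apply Lp.ext
      filter_upwards [mulFun_coe g (c • h), mulFun_coe g h,
        Lp.coeFn_smul c (mulFun g h), Lp.coeFn_smul c h] with x h1 h2 h3 h4
      rw [h1, h3, Pi.smul_apply, h2, h4, Pi.smul_apply, smul_eq_mul, smul_eq_mul]
      ring)

lemma mulFun_bound (g : C(AddCircle (2 * Real.pi), ℂ)) (h : L2Circle) :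
    ‖mulFun g h‖ ≤ ‖g‖ * ‖h‖ := by
  apply Lp.norm_le_mul_norm_of_ae_le_mul (c := ‖g‖) (f := mulFun g h) (g := h)
  filter_upwards [mulFun_coe g h] with x hx
  rw [hx]
  rw [norm_mul]
  exact mul_le_mul_of_nonneg_right (g.norm_coe_le_norm x) (norm_nonneg _)

lemma mulBil_bound (g : C(AddCircle (2 * Real.pi), ℂ)) (h : L2Circle) :
    ‖mulBil g h‖ ≤ 1 * ‖g‖ * ‖h‖ := by
  rw [one_mul]; exact mulFun_bound g h

/-- Multiplication by a continuous function, as a continuous linear map in both variables. -/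
noncomputable def mulCLM :
    C(AddCircle (2 * Real.pi), ℂ) →L[ℂ] L2Circle →L[ℂ] L2Circle :=
  LinearMap.mkContinuous₂ mulBil 1 mulBil_bound

lemma mulCLM_coe (g : C(AddCircle (2 * Real.pi), ℂ)) (h : L2Circle) :
    (mulCLM g h : AddCircle (2 * Real.pi) → ℂ) =ᵐ[μc] fun x => g x * h x :=
  mulFun_coe g h

/-- The commutator `[P, M_g]` as a continuous linear map in `g`. -/
noncomputable def commCLM :
    C(AddCircle (2 * Real.pi), ℂ) →L[ℂ] (L2Circle →L[ℂ] L2Circle) :=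
  ((ContinuousLinearMap.compL ℂ L2Circle L2Circle L2Circle hardyProjection).comp mulCLM) -
    (((ContinuousLinearMap.compL ℂ L2Circle L2Circle L2Circle).flip hardyProjection).comp mulCLM)

lemma commCLM_apply (g : C(AddCircle (2 * Real.pi), ℂ)) :
    commCLM g = hardyProjection ∘L mulCLM g - mulCLM g ∘L hardyProjection := rfl

/-- Multiplication by `fourier n` shifts the Fourier basis. -/
lemma mulCLM_fourier (n m : ℤ) :
    mulCLM (fourier n) (fourierLp 2 m : L2Circle) = (fourierLp 2 (n + m) : L2Circle) := by
  apply Lp.ext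
  filter_upwards [mulCLM_coe (fourier n) (fourierLp 2 m), coeFn_fourierLp 2 m,
    coeFn_fourierLp 2 (n + m)] with x h1 h2 h3
  rw [h1, h3, h2, fourier_add]

lemma hardyProjection_fourierLp_of_nonneg {m : ℤ} (hm : 0 ≤ m) :
    hardyProjection (fourierLp 2 m : L2Circle) = (fourierLp 2 m : L2Circle) := by
  have hmem : (fourierLp 2 m : L2Circle) ∈ hardySpace := by
    apply Submodule.le_topologicalClosure _
    exact Submodule.subset_span
      ⟨m.toNat, show fourierLp 2 ((m.toNat : ℤ)) = _ by rw [Int.toNat_of_nonneg hm]⟩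
  show hardySpace.subtypeL (Submodule.orthogonalProjectionOnto hardySpace (fourierLp 2 m)) = _
  rw [show (fourierLp 2 m : L2Circle) = ((⟨_, hmem⟩ : hardySpace) : L2Circle) from rfl,
    Submodule.orthogonalProjectionOnto_mem_subspace_eq_self]
  rfl

lemma hardyProjection_fourierLp_of_neg {m : ℤ} (hm : m < 0) :
    hardyProjection (fourierLp 2 m : L2Circle) = 0 := by
  have horth : (fourierLp 2 m : L2Circle) ∈ hardySpaceᗮ := by
    rw [Submodule.mem_orthogonal']
    intro u hu
    have hker : hardySpace ≤ (innerSL ℂ (fourierLp 2 m : L2Circle)).ker := by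
      apply Submodule.topologicalClosure_minimal
      · rw [Submodule.span_le]
        rintro _ ⟨k, rfl⟩
        have := orthonormal_iff_ite.mp (@orthonormal_fourier (2 * Real.pi) _) m (k : ℤ)
        simp only [SetLike.mem_coe, LinearMap.mem_ker, ContinuousLinearMap.coe_coe, innerSL_apply_apply]
        rw [this, if_neg (by omega)]
      · exact ContinuousLinearMap.isClosed_ker _
    exact hker hu
  show hardySpace.subtypeL (Submodule.orthogonalProjectionOnto hardySpace (fourierLp 2 m)) = _
  rw [Submodule.orthogonalProjectionOnto_apply_of_mem_orthogonal horth]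
  simp

/-- A continuous operator whose range lies in a finite-dimensional subspace is compact. -/
lemma isCompactOperator_of_range_le {T : L2Circle →L[ℂ] L2Circle} {F : Submodule ℂ L2Circle}
    [FiniteDimensional ℂ F] (h : ∀ x, T x ∈ F) : IsCompactOperator ⇑T := by
  haveI : ProperSpace F := FiniteDimensional.proper ℂ F
  rw [show (⇑T = ⇑(T : L2Circle →ₗ[ℂ] L2Circle)) from rfl,
    isCompactOperator_iff_image_closedBall_subset_compact _ (zero_lt_one (α := ℝ))]
  refine ⟨Subtype.val '' Metric.closedBall (0 : F) ‖T‖,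
    ((isCompact_closedBall _ _).image continuous_subtype_val), ?_⟩
  rintro _ ⟨x, hx, rfl⟩
  refine ⟨⟨T x, h x⟩, ?_, rfl⟩
  rw [Metric.mem_closedBall, dist_zero_right]
  calc ‖(⟨T x, h x⟩ : F)‖ = ‖T x‖ := rfl
    _ ≤ ‖T‖ * ‖x‖ := T.le_opNorm x
    _ ≤ ‖T‖ * 1 := by
        apply mul_le_mul_of_nonneg_left _ (norm_nonneg T)
        simpa [Metric.mem_closedBall, dist_zero_right] using hx
    _ = ‖T‖ := mul_one _

lemma commCLM_fourier_compact (n : ℤ) : IsCompactOperator ⇑(commCLM (fourier n)) := by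
  set F : Submodule ℂ L2Circle :=
    Submodule.span ℂ ((fun k : ℤ => (fourierLp 2 k : L2Circle)) '' Set.Icc (-|n|) |n|) with hF
  haveI : FiniteDimensional ℂ F :=
    FiniteDimensional.span_of_finite ℂ ((Set.finite_Icc _ _).image _)
  apply isCompactOperator_of_range_le (F := F)
  -- the set of `x` with `commCLM (fourier n) x ∈ F` is a closed submodule containing all
  -- `fourierLp 2 m`, hence everything.
  intro x
  set T := commCLM (fourier n)
  have hbasis : ∀ m : ℤ, T (fourierLp 2 m : L2Circle) ∈ F := by
    intro m
    have hT : T (fourierLp 2 m : L2Circle) =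
        hardyProjection (fourierLp 2 (n + m) : L2Circle) -
          mulCLM (fourier n) (hardyProjection (fourierLp 2 m : L2Circle)) := by
      simp only [T, commCLM_apply, ContinuousLinearMap.sub_apply,
        ContinuousLinearMap.comp_apply, mulCLM_fourier]
    rcases le_or_gt 0 m with hm | hm
    · rcases le_or_gt 0 (n + m) with hnm | hnm
      · rw [hT, hardyProjection_fourierLp_of_nonneg hm, hardyProjection_fourierLp_of_nonneg hnm,
          mulCLM_fourier, sub_self]
        exact F.zero_mem
      · rw [hT, hardyProjection_fourierLp_of_nonneg hm, hardyProjection_fourierLp_of_neg hnm,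
          mulCLM_fourier, zero_sub]
        have hn1 := neg_abs_le n; have hn2 := le_abs_self n; have hn0 := abs_nonneg n
        refine F.neg_mem (Submodule.subset_span ⟨n + m, ⟨?_, ?_⟩, rfl⟩) <;> omega
    · rcases le_or_gt 0 (n + m) with hnm | hnm
      · rw [hT, hardyProjection_fourierLp_of_neg hm, hardyProjection_fourierLp_of_nonneg hnm,
          map_zero, sub_zero]
        have hn1 := neg_abs_le n; have hn2 := le_abs_self n; have hn0 := abs_nonneg n
        refine Submodule.subset_span ⟨n + m, ⟨?_, ?_⟩, rfl⟩ <;> omega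
      · rw [hT, hardyProjection_fourierLp_of_neg hm, hardyProjection_fourierLp_of_neg hnm,
          map_zero, sub_zero]
        exact F.zero_mem
  -- closed submodule argument
  have hclosed : IsClosed ((Submodule.comap (T : L2Circle →ₗ[ℂ] L2Circle) F : Set L2Circle)) := by
    have : (Submodule.comap (T : L2Circle →ₗ[ℂ] L2Circle) F : Set L2Circle) = ⇑T ⁻¹' ↑F := rfl
    rw [this]
    exact (Submodule.closed_of_finiteDimensional F).preimage T.continuous
  have hle : (Submodule.span ℂ (Set.range (@fourierLp (2 * Real.pi) _ 2 _))).topologicalClosure ≤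
      Submodule.comap (T : L2Circle →ₗ[ℂ] L2Circle) F := by
    apply Submodule.topologicalClosure_minimal
    · rw [Submodule.span_le]
      rintro _ ⟨m, rfl⟩
      exact hbasis m
    · exact hclosed
  have htop := span_fourierLp_closure_eq_top (T := 2 * Real.pi) (p := 2) (by norm_num)
  rw [htop] at hle
  exact hle (Submodule.mem_top : x ∈ ⊤)

end HardyAux

open HardyAux

/-- For a continuous function `f` on the circle, the commutator `[P, M_f] = P M_f − M_f P`
of the Hardy projection `P` with the multiplication operator `M_f` is compact on `L²(S¹)`. -/
theorem commutator_hardyProjection_mul_isCompact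
    (f : C(AddCircle (2 * Real.pi), ℂ)) (Mf : L2Circle →L[ℂ] L2Circle)
    (hMf : ∀ g : L2Circle,
      (Mf g : AddCircle (2 * Real.pi) → ℂ) =ᵐ[haarAddCircle] fun x => f x * g x) :
    IsCompactOperator ⇑(hardyProjection ∘L Mf - Mf ∘L hardyProjection) := by
  have hMf' : Mf = mulCLM f := by
    refine ContinuousLinearMap.ext fun g => ?_
    exact Lp.ext ((hMf g).trans (mulCLM_coe f g).symm)
  rw [hMf', ← commCLM_apply]
  -- the set of `g` whose commutator is compact is a closed submodule containing the `fourier n`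
  have hker : (Submodule.span ℂ (Set.range (@fourier (2 * Real.pi)))).topologicalClosure ≤
      Submodule.comap (commCLM : C(AddCircle (2 * Real.pi), ℂ) →ₗ[ℂ] _)
        (compactOperator (RingHom.id ℂ) L2Circle L2Circle) := by
    apply Submodule.topologicalClosure_minimal
    · rw [Submodule.span_le]
      rintro _ ⟨n, rfl⟩
      exact commCLM_fourier_compact n
    · have : ((Submodule.comap (commCLM : C(AddCircle (2 * Real.pi), ℂ) →ₗ[ℂ] _)
          (compactOperator (RingHom.id ℂ) L2Circle L2Circle)) : Set C(AddCircle (2 * Real.pi), ℂ))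
          = ⇑commCLM ⁻¹' {T : L2Circle →L[ℂ] L2Circle | IsCompactOperator ⇑T} := rfl
      rw [this]
      exact isClosed_setOf_isCompactOperator.preimage commCLM.continuous
  rw [span_fourier_closure_eq_top] at hker
  exact hker (Submodule.mem_top : f ∈ ⊤)
end
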